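/- Let T ≥ 2, let y_1,…,y_T ∈ ℝ, let γ > 0, λ ≥ 0, and let m be an integer with 1 ≤ m < T. Define C = min_{α ≥ 0} Cost(y_{1:m}, α; γ) + min_{α ≥ 0} Cost(y_{T:(m+1)}, α; 1/γ) + λ and C′ = min_{α ≥ 0} { Cost(y_{1:m}, α; γ) + Cost(y_{T:(m+1)}, γα; 1/γ) }, where the Costs on the interval {1,…,m} use the data (y_1,…,y_m) with decay γ and those on {m+1,…,T} use the time-reversed data (y_T,…,y_{m+1}) with decay 1/γ. Then C ≤ C′ if and only if there exists a segmentation 0 = τ_0 < τ_1 < … < τ_k < τ_{k+1} = T of {1,…,T} achieving the unconstrained minimum of the changepoint objective Σ_{j=0}^{k} min_{α ≥ 0} { (1/2) Σ_{t=τ_j+1}^{τ_{j+1}} (y_t − α γ^{t−τ_{j+1}})² } + λk (over all k ≥ 0 and all segmentations) whose changepoint set {τ_1,…,τ_k} contains m; i.e., C ≤ C′ exactly when m is an estimated changepoint of the ℓ0 changepoint problem applied to y. -/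

import Mathlib

/-- Segment cost `D(a, b, α) = (1/2) ∑_{t=a+1}^{b} (y_t − α γ^{t−b})²`. -/
noncomputable def segCost (y : ℕ → ℝ) (γ : ℝ) (a b : ℕ) (α : ℝ) : ℝ :=
  (1/2) * ∑ t ∈ Finset.Icc (a+1) b, (y t - α * γ ^ ((t : ℤ) - (b : ℤ)))^2

/-- `τ` is a segmentation of the interval `{a+1,…,b}` with `k` changepoints:
`a = τ 0 < τ 1 < … < τ k < τ (k+1) = b`. -/
def IsSeg (a b k : ℕ) (τ : ℕ → ℕ) : Prop :=
  τ 0 = a ∧ τ (k+1) = b ∧ ∀ j ≤ k, τ j < τ (j+1)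

/-- Changepoint objective with per-segment amplitudes:
`∑_{j=0}^{k} D(τ_j, τ_{j+1}, α_j) + λ k`. -/
noncomputable def objAmp (y : ℕ → ℝ) (γ lam : ℝ) (k : ℕ) (τ : ℕ → ℕ) (α : ℕ → ℝ) : ℝ :=
  (∑ j ∈ Finset.range (k+1), segCost y γ (τ j) (τ (j+1)) (α j)) + lam * k

/-- `F(τ)`: the optimal cost of segmenting the first `τ` data points
(minimum of the changepoint objective over segmentations and nonnegative
amplitudes), with the convention `F(0) = −λ`. -/
noncomputable def Fval (y : ℕ → ℝ) (γ lam : ℝ) : ℕ → ℝ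
  | 0 => -lam
  | s+1 => sInf { c | ∃ (k : ℕ) (τ : ℕ → ℕ) (a : ℕ → ℝ), IsSeg 0 (s+1) k τ ∧
      (∀ j ≤ k, 0 ≤ a j) ∧ c = objAmp y γ lam k τ a }

/-- `Cost(y_{1:s}, α; γ) = min_{0 ≤ τ < s} { F(τ) + D(τ, s, α) + λ }`. -/
noncomputable def Cost (y : ℕ → ℝ) (γ lam : ℝ) (s : ℕ) (α : ℝ) : ℝ :=
  sInf { c | ∃ τ : ℕ, τ < s ∧ c = Fval y γ lam τ + segCost y γ τ s α + lam }

/-- Optimal segment cost `min_{α ≥ 0} D(a, b, α)`. -/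
noncomputable def segMin (y : ℕ → ℝ) (γ : ℝ) (a b : ℕ) : ℝ :=
  sInf { c | ∃ α : ℝ, 0 ≤ α ∧ c = segCost y γ a b α }

/-- Changepoint objective with each segment's amplitude optimized separately:
`∑_{j=0}^{k} min_{α ≥ 0} D(τ_j, τ_{j+1}, α) + λ k`. -/
noncomputable def objOpt (y : ℕ → ℝ) (γ lam : ℝ) (k : ℕ) (τ : ℕ → ℕ) : ℝ :=
  (∑ j ∈ Finset.range (k+1), segMin y γ (τ j) (τ (j+1))) + lam * k

section Infra

variable {y : ℕ → ℝ} {γ lam : ℝ}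

lemma quad_min (S : Finset ℕ) (f g : ℕ → ℝ) :
    ∃ α, 0 ≤ α ∧ ∀ β, 0 ≤ β →
      ∑ t ∈ S, (f t - α * g t)^2 ≤ ∑ t ∈ S, (f t - β * g t)^2 := by
  set A := ∑ t ∈ S, (g t)^2 with hA
  set B := ∑ t ∈ S, (f t * g t) with hB
  have key : ∀ c : ℝ, ∑ t ∈ S, (f t - c * g t)^2
      = (∑ t ∈ S, (f t)^2) - 2*c*B + c^2*A := by
    intro c
    have : ∀ t ∈ S, (f t - c * g t)^2 = (f t)^2 - 2*c*(f t * g t) + c^2*(g t)^2 :=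
      fun t _ => by ring
    rw [Finset.sum_congr rfl this, Finset.sum_add_distrib, Finset.sum_sub_distrib,
      ← Finset.mul_sum, ← Finset.mul_sum, hA, hB]
  have hA0 : 0 ≤ A := Finset.sum_nonneg fun t _ => sq_nonneg _
  rcases le_or_gt B 0 with hBle | hBpos
  · refine ⟨0, le_refl _, fun β hβ => ?_⟩
    rw [key, key]
    nlinarith [sq_nonneg β]
  · have hApos : 0 < A := by
      rcases hA0.lt_or_eq with h | h
      · exact h
      · exfalso
        have hg : ∀ t ∈ S, g t = 0 := by
          intro t ht
          have := (Finset.sum_eq_zero_iff_of_nonneg (fun t _ => sq_nonneg (g t))).1 h.symm t ht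
          exact pow_eq_zero_iff two_ne_zero |>.1 this
        have : B = 0 := Finset.sum_eq_zero fun t ht => by rw [hg t ht, mul_zero]
        linarith
    refine ⟨B / A, le_of_lt (div_pos hBpos hApos), fun β hβ => ?_⟩
    rw [key, key]
    have hr : (B / A) * A = B := div_mul_cancel₀ _ (ne_of_gt hApos)
    set r := B / A
    have h1 : 0 ≤ A * (β - r)^2 := mul_nonneg hA0 (sq_nonneg _)
    have expand : A*(β-r)^2 = A*β^2 - 2*β*B + r*B := by
      calc A*(β-r)^2 = A*β^2 - 2*β*(r*A) + r*(r*A) := by ring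
      _ = A*β^2 - 2*β*B + r*B := by rw [hr]
    have h3 : r^2*A = r*B := by
      calc r^2*A = r*(r*A) := by ring
      _ = r*B := by rw [hr]
    have h4 : 0 ≤ A*β^2 - 2*β*B + r*B := expand ▸ h1
    linarith [h4, h3]

lemma segCost_nonneg (y : ℕ → ℝ) (γ : ℝ) (a b : ℕ) (α : ℝ) : 0 ≤ segCost y γ a b α := by
  unfold segCost
  positivity

lemma segMinSet_nonempty (y : ℕ → ℝ) (γ : ℝ) (a b : ℕ) :
    {c | ∃ α : ℝ, 0 ≤ α ∧ c = segCost y γ a b α}.Nonempty :=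
  ⟨segCost y γ a b 0, 0, le_refl _, rfl⟩

lemma segMinSet_bdd (y : ℕ → ℝ) (γ : ℝ) (a b : ℕ) :
    BddBelow {c | ∃ α : ℝ, 0 ≤ α ∧ c = segCost y γ a b α} :=
  ⟨0, fun c hc => by obtain ⟨α, _, rfl⟩ := hc; exact segCost_nonneg y γ a b α⟩

lemma segMin_nonneg (y : ℕ → ℝ) (γ : ℝ) (a b : ℕ) : 0 ≤ segMin y γ a b :=
  le_csInf (segMinSet_nonempty y γ a b)
    (fun c hc => by obtain ⟨α, _, rfl⟩ := hc; exact segCost_nonneg y γ a b α)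

lemma segMin_le (y : ℕ → ℝ) (γ : ℝ) (a b : ℕ) {α : ℝ} (hα : 0 ≤ α) :
    segMin y γ a b ≤ segCost y γ a b α :=
  csInf_le (segMinSet_bdd y γ a b) ⟨α, hα, rfl⟩

lemma segMin_attain (y : ℕ → ℝ) (γ : ℝ) (a b : ℕ) :
    ∃ α, 0 ≤ α ∧ segMin y γ a b = segCost y γ a b α := by
  obtain ⟨α, hα, hopt⟩ := quad_min (Finset.Icc (a+1) b) y (fun t => γ ^ ((t : ℤ) - (b : ℤ)))
  refine ⟨α, hα, ?_⟩
  apply IsLeast.csInf_eq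
  constructor
  · exact ⟨α, hα, rfl⟩
  · rintro c ⟨β, hβ, rfl⟩
    unfold segCost
    have := hopt β hβ
    linarith

end Infra
section Seg

lemma seg_mono {a b k : ℕ} {τ : ℕ → ℕ} (h : IsSeg a b k τ) :
    ∀ {i j : ℕ}, i ≤ j → j ≤ k+1 → τ i ≤ τ j := by
  intro i j hij hjk
  induction j with
  | zero => simp_all
  | succ n ih =>
    rcases Nat.eq_or_lt_of_le hij with h1 | h1
    · exact le_of_eq (by rw [h1])
    · exact le_trans (ih (Nat.lt_succ_iff.1 h1) (by omega)) (le_of_lt (h.2.2 n (by omega)))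

lemma seg_strict {a b k : ℕ} {τ : ℕ → ℕ} (h : IsSeg a b k τ) :
    ∀ {i j : ℕ}, i < j → j ≤ k+1 → τ i < τ j := by
  intro i j hij hjk
  have h1 : τ i < τ (i+1) := h.2.2 i (by omega)
  exact lt_of_lt_of_le h1 (seg_mono h hij hjk)

lemma seg_le_b {a b k : ℕ} {τ : ℕ → ℕ} (h : IsSeg a b k τ) {j : ℕ} (hj : j ≤ k+1) :
    τ j ≤ b := h.2.1 ▸ seg_mono h hj (le_refl _)

lemma seg_a_le {a b k : ℕ} {τ : ℕ → ℕ} (h : IsSeg a b k τ) {j : ℕ} (hj : j ≤ k+1) :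
    a ≤ τ j := h.1 ▸ seg_mono h (Nat.zero_le j) hj

/-- The set of objective values of segmentations of `{1,…,s}` with per-segment
optimized amplitudes. -/
def SegVals (y : ℕ → ℝ) (γ lam : ℝ) (s : ℕ) : Set ℝ :=
  {c | ∃ (k : ℕ) (τ : ℕ → ℕ), IsSeg 0 s k τ ∧ c = objOpt y γ lam k τ}

/-- Optimal segmentation cost, with `G 0 = -lam`. -/
noncomputable def G (y : ℕ → ℝ) (γ lam : ℝ) : ℕ → ℝ
  | 0 => -lam
  | s+1 => sInf (SegVals y γ lam (s+1))

variable {y : ℕ → ℝ} {γ lam : ℝ}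

lemma objOpt_nonneg (hlam : 0 ≤ lam) (k : ℕ) (τ : ℕ → ℕ) : 0 ≤ objOpt y γ lam k τ := by
  unfold objOpt
  have h1 : 0 ≤ ∑ j ∈ Finset.range (k+1), segMin y γ (τ j) (τ (j+1)) :=
    Finset.sum_nonneg fun j _ => segMin_nonneg y γ _ _
  have h2 : (0:ℝ) ≤ lam * k := mul_nonneg hlam (Nat.cast_nonneg k)
  linarith

lemma objAmp_nonneg (hlam : 0 ≤ lam) (k : ℕ) (τ : ℕ → ℕ) (a : ℕ → ℝ) :
    0 ≤ objAmp y γ lam k τ a := by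
  unfold objAmp
  have h1 : 0 ≤ ∑ j ∈ Finset.range (k+1), segCost y γ (τ j) (τ (j+1)) (a j) :=
    Finset.sum_nonneg fun j _ => segCost_nonneg y γ _ _ _
  have h2 : (0:ℝ) ≤ lam * k := mul_nonneg hlam (Nat.cast_nonneg k)
  linarith

lemma SegVals_bdd (hlam : 0 ≤ lam) (s : ℕ) : BddBelow (SegVals y γ lam s) :=
  ⟨0, fun c hc => by obtain ⟨k, τ, _, rfl⟩ := hc; exact objOpt_nonneg hlam k τ⟩

/-- The one-segment segmentation. -/
lemma single_seg (s : ℕ) (hs : 1 ≤ s) :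
    IsSeg 0 s 0 (fun j => if j = 0 then 0 else s) := by
  refine ⟨rfl, rfl, fun j hj => ?_⟩
  interval_cases j
  simpa using Nat.lt_of_lt_of_le Nat.zero_lt_one hs

lemma SegVals_nonempty (s : ℕ) (hs : 1 ≤ s) : (SegVals y γ lam s).Nonempty :=
  ⟨_, 0, _, single_seg s hs, rfl⟩

lemma G_lb (hlam : 0 ≤ lam) {s : ℕ} (hs : 1 ≤ s) {c : ℝ} (hc : c ∈ SegVals y γ lam s) :
    G y γ lam s ≤ c := by
  cases s with
  | zero => omega
  | succ t => exact csInf_le (SegVals_bdd hlam _) hc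

lemma G_nonneg (hlam : 0 ≤ lam) {s : ℕ} (hs : 1 ≤ s) : 0 ≤ G y γ lam s := by
  cases s with
  | zero => omega
  | succ t =>
    exact le_csInf (SegVals_nonempty (t+1) (Nat.succ_le_succ (Nat.zero_le t)))
      (fun c hc => by obtain ⟨k, τ, _, rfl⟩ := hc; exact objOpt_nonneg hlam k τ)

lemma G_ge (hlam : 0 ≤ lam) (s : ℕ) : -lam ≤ G y γ lam s := by
  cases s with
  | zero => exact le_refl _
  | succ t => linarith [G_nonneg (y := y) (γ := γ) hlam (Nat.succ_le_succ (Nat.zero_le t))]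

/-- Extending a segmentation (or the empty prefix) by one final segment. -/
lemma extend_mem (hlam : 0 ≤ lam) {t s : ℕ} (hts : t < s)
    (h : t = 0 ∨ G y γ lam t ∈ SegVals y γ lam t) :
    G y γ lam t + segMin y γ t s + lam ∈ SegVals y γ lam s := by
  rcases h with rfl | h
  · refine ⟨0, fun j => if j = 0 then 0 else s, single_seg s hts, ?_⟩
    show G y γ lam 0 + segMin y γ 0 s + lam = objOpt y γ lam 0 _
    unfold objOpt
    show -lam + segMin y γ 0 s + lam = _
    simp
  · obtain ⟨k', τ', hseg', hval⟩ := h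
    refine ⟨k'+1, fun j => if j ≤ k'+1 then τ' j else s, ?_, ?_⟩
    · refine ⟨by simp [hseg'.1], by simp, fun j hj => ?_⟩
      rcases Nat.lt_or_ge j (k'+1) with h1 | h1
      · simp only [if_pos (le_of_lt h1), if_pos (Nat.succ_le_of_lt h1)]
        exact hseg'.2.2 j (by omega)
      · have hj' : j = k'+1 := le_antisymm hj h1
        subst hj'
        simp only [le_refl, if_pos, if_neg (by omega : ¬ k'+1+1 ≤ k'+1)]
        rw [hseg'.2.1]
        exact hts
    · unfold objOpt
      rw [Finset.sum_range_succ]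
      have hcong : ∀ j ∈ Finset.range (k'+1),
          segMin y γ (if j ≤ k'+1 then τ' j else s) (if j+1 ≤ k'+1 then τ' (j+1) else s)
          = segMin y γ (τ' j) (τ' (j+1)) := by
        intro j hj
        rw [Finset.mem_range] at hj
        rw [if_pos (by omega), if_pos (by omega)]
      rw [Finset.sum_congr rfl hcong]
      simp only [le_refl, if_pos, if_neg (by omega : ¬ k'+1+1 ≤ k'+1), hseg'.2.1]
      rw [hval]
      unfold objOpt
      push_cast
      ring

lemma G_mem (hlam : 0 ≤ lam) : ∀ s : ℕ, 1 ≤ s → G y γ lam s ∈ SegVals y γ lam s := by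
  intro s
  induction s using Nat.strong_induction_on with
  | _ s IH =>
    intro hs
    -- candidate values indexed by the last changepoint t < s
    set Im : Set ℝ := (fun t => G y γ lam t + segMin y γ t s + lam) '' (Set.Iio s) with hIm
    have hImfin : Im.Finite := (Set.finite_Iio s).image _
    have hImne : Im.Nonempty := ⟨_, ⟨0, by simpa using Nat.lt_of_lt_of_le Nat.zero_lt_one hs, rfl⟩⟩
    have hμmem : sInf Im ∈ Im := hImne.csInf_mem hImfin
    have hleast : IsLeast (SegVals y γ lam s) (sInf Im) := by
      constructor
      · obtain ⟨t, ht, hval⟩ := hμmem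
        rw [← hval]
        apply extend_mem hlam ht
        rcases Nat.eq_zero_or_pos t with h | h
        · exact Or.inl h
        · exact Or.inr (IH t ht h)
      · rintro c ⟨k, τ, hseg, rfl⟩
        have hbdd : BddBelow Im := hImfin.bddBelow
        cases k with
        | zero =>
          have h0 : (G y γ lam 0 + segMin y γ 0 s + lam) ∈ Im := ⟨0, by simpa using Nat.lt_of_lt_of_le Nat.zero_lt_one hs, rfl⟩
          have : G y γ lam 0 + segMin y γ 0 s + lam = objOpt y γ lam 0 τ := by
            unfold objOpt
            show -lam + segMin y γ 0 s + lam = _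
            rw [Finset.sum_range_one, hseg.1, hseg.2.1]
            simp
          rw [← this]
          exact csInf_le hbdd h0
        | succ k' =>
          set t := τ (k'+1) with htdef
          have ht1 : 1 ≤ t := by
            have := seg_strict hseg (show 0 < k'+1 by omega) (by omega)
            omega
            
          have hts : t < s := by
            have := hseg.2.2 (k'+1) (le_refl _)
            rw [hseg.2.1] at this
            exact this
          have hpre : IsSeg 0 t k' τ := ⟨hseg.1, rfl, fun j hj => hseg.2.2 j (by omega)⟩
          have hGt : G y γ lam t ≤ objOpt y γ lam k' τ :=
            G_lb hlam ht1 ⟨k', τ, hpre, rfl⟩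
          have hmem : (G y γ lam t + segMin y γ t s + lam) ∈ Im := ⟨t, hts, rfl⟩
          have hsplit : objOpt y γ lam (k'+1) τ
              = objOpt y γ lam k' τ + segMin y γ t s + lam := by
            unfold objOpt
            rw [Finset.sum_range_succ, hseg.2.1]
            push_cast
            ring
          calc sInf Im ≤ G y γ lam t + segMin y γ t s + lam := csInf_le hbdd hmem
            _ ≤ objOpt y γ lam k' τ + segMin y γ t s + lam := by linarith
            _ = objOpt y γ lam (k'+1) τ := hsplit.symm
    cases s with
    | zero => omega
    | succ t =>
      have : G y γ lam (t+1) = sInf Im := hleast.csInf_eq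
      rw [this]
      exact hleast.1

lemma G_append_mem (hlam : 0 ≤ lam) {t s : ℕ} (hts : t < s) :
    G y γ lam t + segMin y γ t s + lam ∈ SegVals y γ lam s := by
  apply extend_mem hlam hts
  rcases Nat.eq_zero_or_pos t with h | h
  · exact Or.inl h
  · exact Or.inr (G_mem hlam t h)

lemma G_le_append (hlam : 0 ≤ lam) {t s : ℕ} (hts : t < s) :
    G y γ lam s ≤ G y γ lam t + segMin y γ t s + lam :=
  G_lb hlam (by omega) (G_append_mem hlam hts)

end Seg
section FvalCost

variable {y : ℕ → ℝ} {γ lam : ℝ}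

lemma Fval_eq_G (hlam : 0 ≤ lam) : ∀ s : ℕ, Fval y γ lam s = G y γ lam s := by
  intro s
  cases s with
  | zero => rfl
  | succ t =>
    show sInf _ = sInf _
    apply le_antisymm
    · -- Fval ≤ G : every objOpt value is attained by an objAmp value
      apply le_csInf (SegVals_nonempty (t+1) (Nat.succ_le_succ (Nat.zero_le t)))
      rintro c ⟨k, τ, hseg, rfl⟩
      have hbdd : BddBelow { c | ∃ (k : ℕ) (τ : ℕ → ℕ) (a : ℕ → ℝ), IsSeg 0 (t+1) k τ ∧
          (∀ j ≤ k, 0 ≤ a j) ∧ c = objAmp y γ lam k τ a } :=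
        ⟨0, fun c hc => by obtain ⟨k, τ, a, _, _, rfl⟩ := hc; exact objAmp_nonneg hlam k τ a⟩
      set a : ℕ → ℝ := fun j => Classical.choose (segMin_attain y γ (τ j) (τ (j+1))) with ha
      have haspec : ∀ j, 0 ≤ a j ∧ segMin y γ (τ j) (τ (j+1)) = segCost y γ (τ j) (τ (j+1)) (a j) :=
        fun j => Classical.choose_spec (segMin_attain y γ (τ j) (τ (j+1)))
      have hval : objAmp y γ lam k τ a = objOpt y γ lam k τ := by
        unfold objAmp objOpt
        congr 1
        exact Finset.sum_congr rfl fun j _ => ((haspec j).2).symm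
      exact hval ▸ csInf_le hbdd ⟨k, τ, a, hseg, fun j _ => (haspec j).1, rfl⟩
    · -- G ≤ Fval : every objAmp value dominates an objOpt value
      apply le_csInf
      · exact ⟨objAmp y γ lam 0 (fun j => if j = 0 then 0 else t+1) (fun _ => 0), 0, _, _,
          single_seg (t+1) (Nat.succ_le_succ (Nat.zero_le t)), fun _ _ => le_refl _, rfl⟩
      · rintro c ⟨k, τ, a, hseg, hanneg, rfl⟩
        have h1 : objOpt y γ lam k τ ≤ objAmp y γ lam k τ a := by
          unfold objAmp objOpt
          have : ∀ j ∈ Finset.range (k+1),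
              segMin y γ (τ j) (τ (j+1)) ≤ segCost y γ (τ j) (τ (j+1)) (a j) := by
            intro j hj
            rw [Finset.mem_range] at hj
            exact segMin_le y γ _ _ (hanneg j (by omega))
          linarith [Finset.sum_le_sum this]
        exact le_trans (csInf_le (SegVals_bdd hlam (t+1)) ⟨k, τ, hseg, rfl⟩) h1

/-- The set defining `Cost` is a finite image. -/
lemma CostSet_eq (y : ℕ → ℝ) (γ lam : ℝ) (s : ℕ) (α : ℝ) :
    { c | ∃ τ : ℕ, τ < s ∧ c = Fval y γ lam τ + segCost y γ τ s α + lam }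
      = (fun τ => Fval y γ lam τ + segCost y γ τ s α + lam) '' (Set.Iio s) := by
  ext c
  constructor
  · rintro ⟨τ, h1, rfl⟩; exact ⟨τ, h1, rfl⟩
  · rintro ⟨τ, h1, rfl⟩; exact ⟨τ, h1, rfl⟩

lemma Cost_attain (hlam : 0 ≤ lam) {s : ℕ} (hs : 1 ≤ s) (α : ℝ) :
    ∃ t, t < s ∧ Cost y γ lam s α = Fval y γ lam t + segCost y γ t s α + lam := by
  have hfin : ((fun τ => Fval y γ lam τ + segCost y γ τ s α + lam) '' (Set.Iio s)).Finite :=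
    (Set.finite_Iio s).image _
  have hne : ((fun τ => Fval y γ lam τ + segCost y γ τ s α + lam) '' (Set.Iio s)).Nonempty :=
    ⟨_, 0, hs, rfl⟩
  have := hne.csInf_mem hfin
  obtain ⟨t, ht, hval⟩ := this
  exact ⟨t, ht, by rw [Cost, CostSet_eq]; exact hval.symm⟩

lemma Cost_le (hlam : 0 ≤ lam) {s t : ℕ} (hts : t < s) (α : ℝ) :
    Cost y γ lam s α ≤ Fval y γ lam t + segCost y γ t s α + lam := by
  rw [Cost, CostSet_eq]
  exact csInf_le ((Set.finite_Iio s).image _).bddBelow ⟨t, hts, rfl⟩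

/-- Minimizing `Cost` over `α ≥ 0` gives the optimal segmentation cost `G s`. -/
lemma costMin (hγ : 0 < γ) (hlam : 0 ≤ lam) {s : ℕ} (hs : 1 ≤ s) :
    IsLeast { c | ∃ α : ℝ, 0 ≤ α ∧ c = Cost y γ lam s α } (G y γ lam s) := by
  have hGle : ∀ t < s, G y γ lam s ≤ G y γ lam t + segMin y γ t s + lam :=
    fun t ht => G_le_append hlam ht
  -- lower bound part
  have hlb : ∀ α : ℝ, 0 ≤ α → G y γ lam s ≤ Cost y γ lam s α := by
    intro α hα
    rw [Cost, CostSet_eq]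
    refine le_csInf ⟨_, ⟨0, hs, rfl⟩⟩ ?_
    rintro c ⟨t, ht, rfl⟩
    show G y γ lam s ≤ Fval y γ lam t + segCost y γ t s α + lam
    have h1 : segMin y γ t s ≤ segCost y γ t s α := segMin_le y γ _ _ hα
    have h2 := hGle t ht
    rw [Fval_eq_G hlam]
    linarith
  constructor
  · -- membership: exhibit the optimal α
    obtain ⟨k, τ, hseg, hval⟩ := G_mem (y := y) (γ := γ) hlam s hs
    -- t* := τ k
    have hts : τ k < s := hseg.2.1 ▸ hseg.2.2 k (le_refl k)
    obtain ⟨α, hα, hαval⟩ := segMin_attain y γ (τ k) s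
    refine ⟨α, hα, ?_⟩
    apply le_antisymm
    · exact hlb α hα
    · -- Cost s α ≤ G (τ k) + segMin (τ k) s + lam = G s
      have h1 : Cost y γ lam s α ≤ Fval y γ lam (τ k) + segCost y γ (τ k) s α + lam :=
        Cost_le hlam hts α
      rw [Fval_eq_G hlam, ← hαval] at h1
      -- show G (τ k) + segMin (τ k) s + lam ≤ G s, hence equality
      have h2 : G y γ lam (τ k) + segMin y γ (τ k) s + lam ≤ G y γ lam s := by
        cases k with
        | zero =>
          rw [hseg.1]
          have : objOpt y γ lam 0 τ = segMin y γ 0 s := by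
            unfold objOpt
            rw [Finset.sum_range_one, hseg.1, hseg.2.1]
            simp
          rw [hval, this]
          show G y γ lam 0 + _ + lam ≤ _
          show -lam + _ + lam ≤ _
          -- need τ 1 = s inside segMin: already rewritten
          linarith
        | succ k' =>
          have ht1 : 1 ≤ τ (k'+1) := by
            have := seg_strict hseg (show 0 < k'+1 by omega) (by omega)
            rw [hseg.1] at this
            omega
          have hpre : IsSeg 0 (τ (k'+1)) k' τ := ⟨hseg.1, rfl, fun j hj => hseg.2.2 j (by omega)⟩
          have hGt : G y γ lam (τ (k'+1)) ≤ objOpt y γ lam k' τ :=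
            G_lb hlam ht1 ⟨k', τ, hpre, rfl⟩
          have hsplit : objOpt y γ lam (k'+1) τ
              = objOpt y γ lam k' τ + segMin y γ (τ (k'+1)) s + lam := by
            unfold objOpt
            rw [Finset.sum_range_succ, hseg.2.1]
            push_cast
            ring
          rw [hval, hsplit]
          linarith
      linarith
  · rintro c ⟨α, hα, rfl⟩
    exact hlb α hα

lemma costMin_sInf (hγ : 0 < γ) (hlam : 0 ≤ lam) {s : ℕ} (hs : 1 ≤ s) :
    sInf { c | ∃ α : ℝ, 0 ≤ α ∧ c = Cost y γ lam s α } = G y γ lam s :=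
  (costMin hγ hlam hs).csInf_eq

end FvalCost
section Rev

variable {y : ℕ → ℝ} {γ : ℝ}

lemma zpow_cast_sub (hγ : 0 < γ) : γ ≠ 0 := ne_of_gt hγ

/-- Reversal identity for segment costs. -/
lemma segCost_rev (hγ : 0 < γ) (T a b : ℕ) (hbT : b ≤ T) (α : ℝ) :
    segCost (fun t => y (T + 1 - t)) (1/γ) a b α
      = segCost y γ (T - b) (T - a) (α * γ ^ ((b:ℤ) - (a:ℤ) - 1)) := by
  have hγ0 : γ ≠ 0 := ne_of_gt hγ
  unfold segCost
  congr 1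
  refine Finset.sum_nbij' (fun t => T + 1 - t) (fun u => T + 1 - u) ?_ ?_ ?_ ?_ ?_
  · intro t ht
    rw [Finset.mem_Icc] at ht ⊢
    omega
  · intro u hu
    rw [Finset.mem_Icc] at hu ⊢
    omega
  · intro t ht
    rw [Finset.mem_Icc] at ht
    omega
  · intro u hu
    rw [Finset.mem_Icc] at hu
    omega
  · intro t ht
    rw [Finset.mem_Icc] at ht
    have h1 : a + 1 ≤ t := ht.1
    have h2 : t ≤ b := ht.2
    have hc1 : ((T + 1 - t : ℕ) : ℤ) = (T:ℤ) + 1 - t := by omega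
    have hc2 : ((T - a : ℕ) : ℤ) = (T:ℤ) - a := by omega
    have : α * (1/γ) ^ ((t:ℤ) - (b:ℤ))
        = α * γ ^ ((b:ℤ) - (a:ℤ) - 1) * γ ^ (((T + 1 - t : ℕ):ℤ) - ((T - a : ℕ):ℤ)) := by
      rw [hc1, hc2, one_div, inv_zpow', mul_assoc, ← zpow_add₀ hγ0]
      congr 1
      congr 1
      ring
    rw [this]
end Rev
section Rev2

variable {y : ℕ → ℝ} {γ : ℝ}

lemma segMin_rev (hγ : 0 < γ) (T a b : ℕ) (hbT : b ≤ T) :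
    segMin (fun t => y (T + 1 - t)) (1/γ) a b = segMin y γ (T - b) (T - a) := by
  have hγ0 : γ ≠ 0 := ne_of_gt hγ
  unfold segMin
  congr 1
  ext c
  constructor
  · rintro ⟨α, hα, rfl⟩
    exact ⟨α * γ ^ ((b:ℤ) - (a:ℤ) - 1),
      mul_nonneg hα (le_of_lt (zpow_pos hγ _)), segCost_rev hγ T a b hbT α⟩
  · rintro ⟨β, hβ, rfl⟩
    refine ⟨β * γ ^ ((a:ℤ) + 1 - (b:ℤ)),
      mul_nonneg hβ (le_of_lt (zpow_pos hγ _)), ?_⟩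
    rw [segCost_rev hγ T a b hbT]
    congr 1
    rw [mul_assoc, ← zpow_add₀ hγ0]
    have he : (a:ℤ) + 1 - (b:ℤ) + ((b:ℤ) - (a:ℤ) - 1) = 0 := by ring
    rw [he, zpow_zero, mul_one]

end Rev2
section Blocks

variable {y : ℕ → ℝ} {γ lam : ℝ}

lemma left_block (hlam : 0 ≤ lam) (t : ℕ) :
    ∃ (c1 : ℕ) (L : ℕ → ℕ), L 0 = 0 ∧ L c1 = t ∧ (∀ j < c1, L j < L (j+1)) ∧
      (∑ j ∈ Finset.range c1, segMin y γ (L j) (L (j+1)))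
        = G y γ lam t + lam - lam * c1 := by
  rcases Nat.eq_zero_or_pos t with rfl | ht
  · exact ⟨0, fun _ => 0, rfl, rfl, by omega, by simp [G]⟩
  · obtain ⟨k1, τ1, hseg, hval⟩ := G_mem (y := y) (γ := γ) hlam t ht
    refine ⟨k1+1, τ1, hseg.1, hseg.2.1, fun j hj => hseg.2.2 j (by omega), ?_⟩
    rw [hval]
    unfold objOpt
    push_cast
    ring

lemma right_block (hlam : 0 ≤ lam) (hγ : 0 < γ) (T σ : ℕ) (hσT : σ ≤ T) :
    ∃ (c2 : ℕ) (R : ℕ → ℕ), R 0 = T - σ ∧ R c2 = T ∧ (∀ i < c2, R i < R (i+1)) ∧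
      (∑ i ∈ Finset.range c2, segMin y γ (R i) (R (i+1)))
        = G (fun s => y (T + 1 - s)) (1/γ) lam σ + lam - lam * c2 := by
  rcases Nat.eq_zero_or_pos σ with rfl | hσ
  · exact ⟨0, fun _ => T, by show T = T - 0; omega, rfl, by omega, by simp [G]⟩
  · obtain ⟨k2, τ2, hseg, hval⟩ := G_mem (y := fun s => y (T + 1 - s)) (γ := 1/γ) hlam σ hσ
    refine ⟨k2+1, fun i => T - τ2 (k2+1-i),
      by show T - τ2 (k2+1-0) = T - σ; rw [Nat.sub_zero, hseg.2.1],
      by show T - τ2 (k2+1-(k2+1)) = T; rw [Nat.sub_self, hseg.1, Nat.sub_zero], ?_, ?_⟩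
    · intro i hi
      dsimp only
      have e1 : k2+1-(i+1) = k2-i := by omega
      have h3 : k2+1-i = k2-i+1 := by omega
      rw [e1, h3]
      have h1 : τ2 (k2-i) < τ2 (k2-i+1) := hseg.2.2 (k2-i) (by omega)
      have h2 : τ2 (k2-i+1) ≤ σ := seg_le_b hseg (by omega)
      omega
    · dsimp only
      have hterm : ∀ i ∈ Finset.range (k2+1),
          segMin y γ (T - τ2 (k2+1-i)) (T - τ2 (k2+1-(i+1)))
            = (fun i => segMin y γ (T - τ2 (i+1)) (T - τ2 i)) (k2+1-1-i) := by
        intro i hi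
        rw [Finset.mem_range] at hi
        have h3 : k2+1-i = (k2-i)+1 := by omega
        have h4 : k2+1-(i+1) = k2-i := by omega
        have h5 : k2+1-1-i = k2-i := by omega
        rw [h3, h4, h5]
      rw [Finset.sum_congr rfl hterm,
        Finset.sum_range_reflect (fun i => segMin y γ (T - τ2 (i + 1)) (T - τ2 i)) (k2+1)]
      have hterm2 : ∀ i ∈ Finset.range (k2+1),
          segMin y γ (T - τ2 (i+1)) (T - τ2 i)
            = segMin (fun s => y (T + 1 - s)) (1/γ) (τ2 i) (τ2 (i+1)) := by
        intro i hi
        rw [Finset.mem_range] at hi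
        rw [segMin_rev (y := y) hγ T (τ2 i) (τ2 (i+1))
          (le_trans (seg_le_b hseg (by omega)) hσT)]
      rw [Finset.sum_congr rfl hterm2, hval]
      unfold objOpt
      push_cast
      ring

lemma join_full (hγ : 0 < γ) (hlam : 0 ≤ lam) {t w T : ℕ} (htw : t < w) (hwT : w ≤ T) :
    ∃ (k : ℕ) (τ : ℕ → ℕ) (j0 : ℕ), IsSeg 0 T k τ ∧ j0 ≤ k ∧ τ j0 = t ∧ τ (j0+1) = w ∧
      objOpt y γ lam k τ
        = G y γ lam t + segMin y γ t w
          + G (fun s => y (T + 1 - s)) (1/γ) lam (T - w) + 2*lam := by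
  obtain ⟨c1, L, hL0, hLc, hLmono, hLsum⟩ := left_block (y := y) (γ := γ) hlam t
  obtain ⟨c2, R, hR0, hRc, hRmono, hRsum⟩ :=
    right_block (y := y) (γ := γ) hlam hγ T (T - w) (by omega)
  have hR0' : R 0 = w := by omega
  refine ⟨c1 + c2, fun j => if j ≤ c1 then L j else R (j - (c1+1)), c1, ?_, by omega, ?_, ?_, ?_⟩
  · refine ⟨by simp [hL0], ?_, ?_⟩
    · dsimp only
      rw [if_neg (by omega)]
      have : c1 + c2 + 1 - (c1+1) = c2 := by omega
      rw [this, hRc]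
    · intro j hj
      dsimp only
      rcases Nat.lt_or_ge j c1 with h1 | h1
      · rw [if_pos (by omega), if_pos (by omega)]
        exact hLmono j h1
      · rcases Nat.eq_or_lt_of_le h1 with h2 | h2
        · rw [if_pos (by omega), if_neg (by omega)]
          have e : j + 1 - (c1+1) = 0 := by omega
          rw [e, hR0', ← h2, hLc]
          exact htw
        · rw [if_neg (by omega), if_neg (by omega)]
          have h3 : j + 1 - (c1+1) = (j - (c1+1)) + 1 := by omega
          rw [h3]
          exact hRmono _ (by omega)
  · show (if c1 ≤ c1 then L c1 else R (c1 - (c1+1))) = t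
    rw [if_pos (le_refl c1)]; exact hLc
  · show (if c1+1 ≤ c1 then L (c1+1) else R (c1+1 - (c1+1))) = w
    rw [if_neg (by omega)]
    have : c1 + 1 - (c1+1) = 0 := by omega
    rw [this, hR0']
  · unfold objOpt
    dsimp only
    have hsplit : Finset.range (c1 + c2 + 1) = Finset.Ico 0 (c1 + c2 + 1) := by
      rw [Finset.range_eq_Ico]
    rw [hsplit, ← Finset.sum_Ico_consecutive _ (Nat.zero_le c1) (by omega : c1 ≤ c1 + c2 + 1),
      ← Finset.range_eq_Ico, Finset.sum_Ico_eq_sum_range]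
    have hn : c1 + c2 + 1 - c1 = c2 + 1 := by omega
    rw [hn, Finset.sum_range_succ']
    have e1 : ∀ j ∈ Finset.range c1,
        segMin y γ (if j ≤ c1 then L j else R (j - (c1+1)))
          (if j+1 ≤ c1 then L (j+1) else R (j+1 - (c1+1)))
          = segMin y γ (L j) (L (j+1)) := by
      intro j hj
      rw [Finset.mem_range] at hj
      rcases Nat.eq_or_lt_of_le hj with h2 | h2
      · rw [if_pos (by omega), if_pos (by omega)]
      · rw [if_pos (by omega), if_pos (by omega)]
    have e2 : ∀ i ∈ Finset.range c2,
        segMin y γ (if c1 + (i+1) ≤ c1 then L (c1+(i+1)) else R (c1+(i+1) - (c1+1)))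
          (if c1 + (i+1) + 1 ≤ c1 then L (c1+(i+1)+1) else R (c1+(i+1)+1 - (c1+1)))
          = segMin y γ (R i) (R (i+1)) := by
      intro i hi
      rw [if_neg (by omega), if_neg (by omega)]
      have h1 : c1 + (i+1) - (c1+1) = i := by omega
      have h2 : c1 + (i+1) + 1 - (c1+1) = i + 1 := by omega
      rw [h1, h2]
    have e3 : segMin y γ (if c1 + 0 ≤ c1 then L (c1+0) else R (c1+0 - (c1+1)))
          (if c1 + 0 + 1 ≤ c1 then L (c1+0+1) else R (c1+0+1 - (c1+1)))
          = segMin y γ t w := by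
      rw [if_pos (by omega), if_neg (by omega)]
      have h1 : c1 + 0 + 1 - (c1+1) = 0 := by omega
      have h2 : c1 + 0 = c1 := by omega
      rw [h1, h2, hR0', hLc]
    rw [Finset.sum_congr rfl e1, Finset.sum_congr rfl e2, e3, hLsum, hRsum]
    push_cast
    ring

lemma join_meet (hγ : 0 < γ) (hlam : 0 ≤ lam) {T m : ℕ} (hm1 : 1 ≤ m) (hm2 : m < T) :
    ∃ (k : ℕ) (τ : ℕ → ℕ) (j0 : ℕ), IsSeg 0 T k τ ∧ 1 ≤ j0 ∧ j0 ≤ k ∧ τ j0 = m ∧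
      objOpt y γ lam k τ
        = G y γ lam m + G (fun s => y (T + 1 - s)) (1/γ) lam (T - m) + lam := by
  obtain ⟨c1, L, hL0, hLc, hLmono, hLsum⟩ := left_block (y := y) (γ := γ) hlam m
  obtain ⟨c2, R, hR0, hRc, hRmono, hRsum⟩ :=
    right_block (y := y) (γ := γ) hlam hγ T (T - m) (by omega)
  have hR0' : R 0 = m := by omega
  have hc1 : 1 ≤ c1 := by
    rcases Nat.eq_zero_or_pos c1 with h | h
    · exfalso; rw [h] at hLc; omega
    · exact h
  have hc2 : 1 ≤ c2 := by
    rcases Nat.eq_zero_or_pos c2 with h | h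
    · exfalso; rw [h] at hRc; omega
    · exact h
  refine ⟨c1 + c2 - 1, fun j => if j ≤ c1 then L j else R (j - c1), c1, ?_, hc1, by omega,
    by show (if c1 ≤ c1 then L c1 else R (c1 - c1)) = m; rw [if_pos (le_refl c1)]; exact hLc, ?_⟩
  · refine ⟨by simp [hL0], ?_, ?_⟩
    · dsimp only
      rw [if_neg (by omega)]
      have : c1 + c2 - 1 + 1 - c1 = c2 := by omega
      rw [this, hRc]
    · intro j hj
      dsimp only
      rcases Nat.lt_or_ge j c1 with h1 | h1
      · rw [if_pos (by omega), if_pos (by omega)]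
        exact hLmono j h1
      · rcases Nat.eq_or_lt_of_le h1 with h2 | h2
        · rw [if_pos (by omega), if_neg (by omega)]
          have e : j + 1 - c1 = 1 := by omega
          rw [e, ← h2, hLc]
          have h4 : R 0 < R 1 := by simpa using hRmono 0 (by omega)
          omega
        · rw [if_neg (by omega), if_neg (by omega)]
          have h3 : j + 1 - c1 = (j - c1) + 1 := by omega
          rw [h3]
          exact hRmono _ (by omega)
  · unfold objOpt
    dsimp only
    have hk1 : c1 + c2 - 1 + 1 = c1 + c2 := by omega
    rw [hk1, Finset.range_eq_Ico,
      ← Finset.sum_Ico_consecutive _ (Nat.zero_le c1) (by omega : c1 ≤ c1 + c2),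
      ← Finset.range_eq_Ico, Finset.sum_Ico_eq_sum_range]
    have hn : c1 + c2 - c1 = c2 := by omega
    rw [hn]
    have e1 : ∀ j ∈ Finset.range c1,
        segMin y γ (if j ≤ c1 then L j else R (j - c1))
          (if j+1 ≤ c1 then L (j+1) else R (j+1 - c1))
          = segMin y γ (L j) (L (j+1)) := by
      intro j hj
      rw [Finset.mem_range] at hj
      rcases Nat.eq_or_lt_of_le hj with h2 | h2
      · rw [if_pos (by omega), if_pos (by omega)]
      · rw [if_pos (by omega), if_pos (by omega)]
    have e2 : ∀ i ∈ Finset.range c2,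
        segMin y γ (if c1 + i ≤ c1 then L (c1+i) else R (c1+i - c1))
          (if c1 + i + 1 ≤ c1 then L (c1+i+1) else R (c1+i+1 - c1))
          = segMin y γ (R i) (R (i+1)) := by
      intro i hi
      rcases Nat.eq_zero_or_pos i with rfl | hi0
      · rw [if_pos (by omega), if_neg (by omega)]
        have h1 : c1 + 0 + 1 - c1 = 1 := by omega
        have h2 : c1 + 0 = c1 := by omega
        rw [h1, h2, hLc, ← hR0']
      · rw [if_neg (by omega), if_neg (by omega)]
        have h1 : c1 + i - c1 = i := by omega
        have h2 : c1 + i + 1 - c1 = i + 1 := by omega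
        rw [h1, h2]
    rw [Finset.sum_congr rfl e1, Finset.sum_congr rfl e2, hLsum, hRsum]
    have hcast : ((c1 + c2 - 1 : ℕ) : ℝ) = (c1 : ℝ) + c2 - 1 := by
      push_cast [Nat.cast_sub (by omega : 1 ≤ c1 + c2)]
      ring
    rw [hcast]
    ring

end Blocks
section Bounds

variable {y : ℕ → ℝ} {γ lam : ℝ}

lemma prefix_bound (hlam : 0 ≤ lam) {s k : ℕ} {τ : ℕ → ℕ} (hseg : IsSeg 0 s k τ)
    {j0 : ℕ} (hj0 : j0 ≤ k) :
    G y γ lam (τ j0) + lam - lam * j0 ≤ ∑ j ∈ Finset.range j0, segMin y γ (τ j) (τ (j+1)) := by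
  cases j0 with
  | zero =>
    rw [hseg.1]
    show G y γ lam 0 + lam - lam * (0:ℕ) ≤ _
    show -lam + lam - lam * ((0:ℕ):ℝ) ≤ _
    simp
  | succ j' =>
    have hpre : IsSeg 0 (τ (j'+1)) j' τ := ⟨hseg.1, rfl, fun j hj => hseg.2.2 j (by omega)⟩
    have ht1 : 1 ≤ τ (j'+1) := by
      have := seg_strict hseg (show 0 < j'+1 by omega) (by omega)
      rw [hseg.1] at this
      omega
    have hGt : G y γ lam (τ (j'+1)) ≤ objOpt y γ lam j' τ :=
      G_lb hlam ht1 ⟨j', τ, hpre, rfl⟩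
    unfold objOpt at hGt
    push_cast
    linarith

lemma suffix_bound (hγ : 0 < γ) (hlam : 0 ≤ lam) {T k : ℕ} {τ : ℕ → ℕ}
    (hseg : IsSeg 0 T k τ) {p : ℕ} (hp : p ≤ k+1) :
    G (fun s => y (T + 1 - s)) (1/γ) lam (T - τ p) + lam - lam * ((k+1-p : ℕ) : ℝ)
      ≤ ∑ j ∈ Finset.Ico p (k+1), segMin y γ (τ j) (τ (j+1)) := by
  rcases Nat.eq_or_lt_of_le hp with rfl | hpk
  · rw [hseg.2.1, Nat.sub_self, Nat.sub_self]
    show -lam + lam - lam * ((0:ℕ):ℝ) ≤ _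
    simp
  · have hpk' : p ≤ k := by omega
    -- reversed segmentation of the tail
    set τ2 : ℕ → ℕ := fun i => T - τ (k+1-i) with hτ2
    have hτpT : τ p < T := by
      have := seg_strict hseg (show p < k+1 by omega) (le_refl _)
      rw [hseg.2.1] at this
      exact this
    have hseg2 : IsSeg 0 (T - τ p) (k-p) τ2 := by
      refine ⟨?_, ?_, ?_⟩
      · show T - τ (k+1-0) = 0
        rw [Nat.sub_zero, hseg.2.1, Nat.sub_self]
      · show T - τ (k+1-(k-p+1)) = T - τ p
        have : k+1-(k-p+1) = p := by omega
        rw [this]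
      · intro i hi
        show T - τ (k+1-i) < T - τ (k+1-(i+1))
        have e1 : k+1-(i+1) = k-i := by omega
        have h3 : k+1-i = k-i+1 := by omega
        rw [e1, h3]
        have h1 : τ (k-i) < τ (k-i+1) := hseg.2.2 (k-i) (by omega)
        have h2 : τ (k-i+1) ≤ T := seg_le_b hseg (by omega)
        omega
    have hG2 : G (fun s => y (T + 1 - s)) (1/γ) lam (T - τ p)
        ≤ objOpt (fun s => y (T + 1 - s)) (1/γ) lam (k-p) τ2 :=
      G_lb hlam (by omega) ⟨k-p, τ2, hseg2, rfl⟩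
    have hobj : objOpt (fun s => y (T + 1 - s)) (1/γ) lam (k-p) τ2
        = (∑ j ∈ Finset.Ico p (k+1), segMin y γ (τ j) (τ (j+1))) + lam * ((k-p : ℕ) : ℝ) := by
      unfold objOpt
      congr 1
      have hterm : ∀ i ∈ Finset.range (k-p+1),
          segMin (fun s => y (T + 1 - s)) (1/γ) (τ2 i) (τ2 (i+1))
            = segMin y γ (τ (k-i)) (τ (k-i+1)) := by
        intro i hi
        rw [Finset.mem_range] at hi
        rw [segMin_rev (y := y) hγ T (τ2 i) (τ2 (i+1)) (by show T - τ (k+1-(i+1)) ≤ T; omega)]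
        have e1 : k+1-(i+1) = k-i := by omega
        have h3 : k+1-i = k-i+1 := by omega
        have hb1 : τ (k-i) ≤ T := seg_le_b hseg (by omega)
        have hb2 : τ (k-i+1) ≤ T := seg_le_b hseg (by omega)
        have g1 : T - τ2 (i+1) = τ (k-i) := by
          show T - (T - τ (k+1-(i+1))) = τ (k-i)
          rw [e1]
          omega
        have g2 : T - τ2 i = τ (k-i+1) := by
          show T - (T - τ (k+1-i)) = τ (k-i+1)
          rw [h3]
          omega
        rw [g1, g2]
      rw [Finset.sum_congr rfl hterm]
      refine Finset.sum_nbij' (fun i => k - i) (fun j => k - j) ?_ ?_ ?_ ?_ ?_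
      · intro i hi
        rw [Finset.mem_range] at hi
        rw [Finset.mem_Ico]
        omega
      · intro j hj
        rw [Finset.mem_Ico] at hj
        rw [Finset.mem_range]
        omega
      · intro i hi
        rw [Finset.mem_range] at hi
        omega
      · intro j hj
        rw [Finset.mem_Ico] at hj
        omega
      · intro i _
        rfl
    rw [hobj] at hG2
    have hcast : ((k+1-p : ℕ) : ℝ) = ((k-p : ℕ) : ℝ) + 1 := by
      have : k+1-p = (k-p) + 1 := by omega
      rw [this]
      push_cast
      ring
    rw [hcast]
    linarith

end Bounds
section Assemble

variable {y : ℕ → ℝ} {γ lam : ℝ}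

lemma cost_nonneg (hlam : 0 ≤ lam) {s : ℕ} (hs : 1 ≤ s) (α : ℝ) :
    0 ≤ Cost y γ lam s α := by
  rw [Cost]
  refine le_csInf ⟨_, ⟨0, hs, rfl⟩⟩ ?_
  rintro c ⟨t, ht, rfl⟩
  show (0:ℝ) ≤ Fval y γ lam t + segCost y γ t s α + lam
  have h1 : -lam ≤ Fval y γ lam t := by
    rw [Fval_eq_G hlam]; exact G_ge hlam t
  have h2 := segCost_nonneg y γ t s α
  linarith

lemma key_split (hγ : 0 < γ) {T m σ t : ℕ} (ht : t < m) (hmT : m < T) (hσ : σ < T - m) (α : ℝ) :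
    segCost y γ t m α + segCost (fun s => y (T + 1 - s)) (1/γ) σ (T-m) (γ * α)
      = segCost y γ t (T - σ) (α * γ ^ (((T-σ : ℕ) : ℤ) - (m : ℤ))) := by
  have hγ0 : γ ≠ 0 := ne_of_gt hγ
  rw [segCost_rev hγ T σ (T-m) (by omega)]
  have e1 : T - (T - m) = m := by omega
  rw [e1]
  have e2 : γ * α * γ ^ (((T-m : ℕ) : ℤ) - (σ : ℤ) - 1)
      = α * γ ^ (((T-σ : ℕ) : ℤ) - (m : ℤ)) := by
    have c1 : ((T-m : ℕ) : ℤ) = (T : ℤ) - m := by omega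
    have c2 : ((T-σ : ℕ) : ℤ) = (T : ℤ) - σ := by omega
    rw [c1, c2]
    have : γ * α * γ ^ ((T : ℤ) - m - σ - 1)
        = α * (γ ^ (1 : ℤ) * γ ^ ((T : ℤ) - m - σ - 1)) := by
      rw [zpow_one]; ring
    rw [this, ← zpow_add₀ hγ0]
    congr 2
    ring
  rw [e2]
  set β := α * γ ^ (((T-σ : ℕ) : ℤ) - (m : ℤ)) with hβ
  unfold segCost
  have hsum1 : ∀ u ∈ Finset.Icc (t+1) m, (y u - α * γ ^ ((u:ℤ) - (m:ℤ)))^2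
      = (y u - β * γ ^ ((u:ℤ) - ((T-σ : ℕ) : ℤ)))^2 := by
    intro u hu
    rw [hβ, mul_assoc, ← zpow_add₀ hγ0]
    congr 3
    ring
  rw [Finset.sum_congr rfl hsum1, ← mul_add]
  congr 1
  rw [Finset.Icc_add_one_left_eq_Ioc, Finset.Icc_add_one_left_eq_Ioc, Finset.Icc_add_one_left_eq_Ioc]
  exact Finset.sum_Ioc_consecutive _ (by omega : t ≤ m) (by omega : m ≤ T - σ)

lemma Sm_lb (hγ : 0 < γ) (hlam : 0 ≤ lam) {T m : ℕ} (hm1 : 1 ≤ m) (hmT : m < T)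
    {k j0 : ℕ} {τ : ℕ → ℕ} (hseg : IsSeg 0 T k τ) (hj1 : 1 ≤ j0) (hj0 : j0 ≤ k)
    (hτ : τ j0 = m) :
    G y γ lam m + G (fun s => y (T + 1 - s)) (1/γ) lam (T - m) + lam
      ≤ objOpt y γ lam k τ := by
  have hpre := prefix_bound (y := y) (γ := γ) hlam hseg hj0
  have hsuf := suffix_bound (y := y) hγ hlam hseg (show j0 ≤ k+1 by omega)
  rw [hτ] at hpre hsuf
  have hsplit : (∑ j ∈ Finset.range j0, segMin y γ (τ j) (τ (j+1)))
      + (∑ j ∈ Finset.Ico j0 (k+1), segMin y γ (τ j) (τ (j+1)))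
      = ∑ j ∈ Finset.range (k+1), segMin y γ (τ j) (τ (j+1)) := by
    simp only [Finset.range_eq_Ico]
    exact Finset.sum_Ico_consecutive _ (Nat.zero_le j0) (by omega)
  have hcast : ((k+1-j0 : ℕ) : ℝ) = (k : ℝ) + 1 - j0 := by
    rw [Nat.cast_sub (show j0 ≤ k+1 by omega)]
    push_cast
    ring
  rw [hcast] at hsuf
  unfold objOpt
  linarith

lemma Sn_lb (hγ : 0 < γ) (hlam : 0 ≤ lam) {T m : ℕ} (hm1 : 1 ≤ m) (hmT : m < T)
    {k j0 : ℕ} {τ : ℕ → ℕ} (hseg : IsSeg 0 T k τ) (hj0 : j0 ≤ k)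
    (hτ1 : τ j0 < m) (hτ2 : m < τ (j0+1)) :
    G y γ lam (τ j0) + segMin y γ (τ j0) (T - (T - τ (j0+1)))
        + G (fun s => y (T + 1 - s)) (1/γ) lam (T - τ (j0+1)) + 2*lam
      ≤ objOpt y γ lam k τ := by
  have hwT : τ (j0+1) ≤ T := seg_le_b hseg (by omega)
  have hTw : T - (T - τ (j0+1)) = τ (j0+1) := by omega
  rw [hTw]
  have hpre := prefix_bound (y := y) (γ := γ) hlam hseg hj0
  have hsuf := suffix_bound (y := y) hγ hlam hseg (show j0+1 ≤ k+1 by omega)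
  have hsplit : (∑ j ∈ Finset.range j0, segMin y γ (τ j) (τ (j+1)))
      + segMin y γ (τ j0) (τ (j0+1))
      + (∑ j ∈ Finset.Ico (j0+1) (k+1), segMin y γ (τ j) (τ (j+1)))
      = ∑ j ∈ Finset.range (k+1), segMin y γ (τ j) (τ (j+1)) := by
    have h1 : (∑ j ∈ Finset.Ico 0 j0, segMin y γ (τ j) (τ (j+1)))
        + (∑ j ∈ Finset.Ico j0 (k+1), segMin y γ (τ j) (τ (j+1)))
        = ∑ j ∈ Finset.Ico 0 (k+1), segMin y γ (τ j) (τ (j+1)) :=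
      Finset.sum_Ico_consecutive _ (Nat.zero_le j0) (by omega)
    have h2 : (∑ j ∈ Finset.Ico j0 (j0+1), segMin y γ (τ j) (τ (j+1)))
        + (∑ j ∈ Finset.Ico (j0+1) (k+1), segMin y γ (τ j) (τ (j+1)))
        = ∑ j ∈ Finset.Ico j0 (k+1), segMin y γ (τ j) (τ (j+1)) :=
      Finset.sum_Ico_consecutive _ (by omega) (by omega)
    have h3 : (∑ j ∈ Finset.Ico j0 (j0+1), segMin y γ (τ j) (τ (j+1)))
        = segMin y γ (τ j0) (τ (j0+1)) := by
      rw [Nat.Ico_succ_singleton, Finset.sum_singleton]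
    simp only [Finset.range_eq_Ico]
    rw [← h1, ← h2, h3]
    ring
  have hcast : ((k+1-(j0+1) : ℕ) : ℝ) = (k : ℝ) - j0 := by
    have e : k+1-(j0+1) = k - j0 := by omega
    rw [e, Nat.cast_sub hj0]
  rw [hcast] at hsuf
  unfold objOpt
  linarith

lemma S_split {T m k : ℕ} {τ : ℕ → ℕ} (hm1 : 1 ≤ m) (hmT : m < T) (hseg : IsSeg 0 T k τ) :
    (∃ j, 1 ≤ j ∧ j ≤ k ∧ τ j = m) ∨ (∃ j0, j0 ≤ k ∧ τ j0 < m ∧ m < τ (j0+1)) := by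
  classical
  set SJ := (Finset.range (k+1)).filter (fun j => τ j < m) with hSJ
  have h0 : 0 ∈ SJ := by
    rw [hSJ, Finset.mem_filter, Finset.mem_range]
    exact ⟨by omega, by rw [hseg.1]; omega⟩
  set j0 := SJ.max' ⟨0, h0⟩ with hj0def
  have hj0mem : j0 ∈ SJ := SJ.max'_mem ⟨0, h0⟩
  rw [hSJ, Finset.mem_filter, Finset.mem_range] at hj0mem
  have hj0k : j0 ≤ k := by omega
  have hτj0 : τ j0 < m := hj0mem.2
  have hnext : m ≤ τ (j0+1) := by
    by_contra h
    push_neg at h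
    rcases Nat.lt_or_ge (j0+1) (k+1) with h1 | h1
    · have hmem : j0+1 ∈ SJ := by
        rw [hSJ, Finset.mem_filter, Finset.mem_range]
        exact ⟨h1, h⟩
      have := SJ.le_max' _ hmem
      omega
    · have : j0 + 1 = k + 1 := by omega
      rw [this, hseg.2.1] at h
      omega
  rcases Nat.eq_or_lt_of_le hnext with heq | hlt
  · left
    refine ⟨j0+1, by omega, ?_, heq.symm⟩
    by_contra h
    push_neg at h
    have : j0 + 1 = k + 1 := by omega
    rw [this, hseg.2.1] at heq
    omega
  · exact Or.inr ⟨j0, hj0k, hτj0, hlt⟩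

end Assemble
/-- with
`C  = min_{α ≥ 0} Cost(y_{1:m}, α; γ) + min_{α ≥ 0} Cost(y_{T:(m+1)}, α; 1/γ) + λ` and
`C′ = min_{α ≥ 0} { Cost(y_{1:m}, α; γ) + Cost(y_{T:(m+1)}, γα; 1/γ) }`,
we have `C ≤ C′` if and only if some segmentation of `{1,…,T}` achieving the unconstrained
minimum of the changepoint objective has `m` among its changepoints. -/
theorem C_le_Cprime_iff_m_is_changepoint (T : ℕ) (hT : 2 ≤ T) (y : ℕ → ℝ)
    (γ lam : ℝ) (hγ : 0 < γ) (hlam : 0 ≤ lam) (m : ℕ) (hm1 : 1 ≤ m) (hm2 : m < T) :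
    (sInf { c | ∃ α : ℝ, 0 ≤ α ∧ c = Cost y γ lam m α } +
        sInf { c | ∃ α : ℝ, 0 ≤ α ∧
          c = Cost (fun t => y (T + 1 - t)) (1/γ) lam (T - m) α } + lam ≤
      sInf { c | ∃ α : ℝ, 0 ≤ α ∧ c = Cost y γ lam m α +
        Cost (fun t => y (T + 1 - t)) (1/γ) lam (T - m) (γ * α) }) ↔
    ∃ (k : ℕ) (τ : ℕ → ℕ), IsSeg 0 T k τ ∧ (∃ j, 1 ≤ j ∧ j ≤ k ∧ τ j = m) ∧
      objOpt y γ lam k τ =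
        sInf { c | ∃ (k' : ℕ) (τ' : ℕ → ℕ), IsSeg 0 T k' τ' ∧
          c = objOpt y γ lam k' τ' } := by
  have hγ0 : γ ≠ 0 := ne_of_gt hγ
  have hγ' : (0:ℝ) < 1/γ := by positivity
  have hTm : 1 ≤ T - m := by omega
  rw [costMin_sInf hγ hlam hm1, costMin_sInf hγ' hlam hTm]
  have hSets : { c | ∃ (k' : ℕ) (τ' : ℕ → ℕ), IsSeg 0 T k' τ' ∧
      c = objOpt y γ lam k' τ' } = SegVals y γ lam T := rfl
  rw [hSets]
  set A3 : Set ℝ := { c | ∃ α : ℝ, 0 ≤ α ∧ c = Cost y γ lam m α +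
    Cost (fun t => y (T + 1 - t)) (1/γ) lam (T - m) (γ * α) } with hA3
  -- every Sn-type value is a segmentation value
  have hW_mem : ∀ t σ : ℕ, t < m → σ < T - m →
      ∃ (k : ℕ) (τ : ℕ → ℕ) (j0 : ℕ), IsSeg 0 T k τ ∧ j0 ≤ k ∧ τ j0 < m ∧ m < τ (j0+1) ∧
        objOpt y γ lam k τ = G y γ lam t + segMin y γ t (T - σ)
          + G (fun s => y (T + 1 - s)) (1/γ) lam σ + 2*lam := by
    intro t σ ht hσ
    obtain ⟨k, τ, j0, hseg, hj0, hτj0, hτj1, hval⟩ :=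
      join_full (y := y) hγ hlam (show t < T - σ by omega) (show T - σ ≤ T by omega)
    have e : T - (T - σ) = σ := by omega
    rw [e] at hval
    exact ⟨k, τ, j0, hseg, hj0, by omega, by omega, hval⟩
  have hA3_bdd : BddBelow A3 := by
    refine ⟨0, ?_⟩
    rintro c ⟨α', hα', rfl⟩
    have h1 := cost_nonneg (y := y) (γ := γ) hlam hm1 α'
    have h2 := cost_nonneg (y := fun t => y (T + 1 - t)) (γ := 1/γ) hlam hTm (γ*α')
    linarith
  have hA3_ne : A3.Nonempty := ⟨_, 0, le_refl _, rfl⟩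
  have hA3_le_W : ∀ t σ : ℕ, t < m → σ < T - m →
      sInf A3 ≤ G y γ lam t + segMin y γ t (T - σ)
        + G (fun s => y (T + 1 - s)) (1/γ) lam σ + 2*lam := by
    intro t σ ht hσ
    obtain ⟨β, hβ, hβval⟩ := segMin_attain y γ t (T - σ)
    set α := β * γ ^ ((m:ℤ) - ((T-σ : ℕ):ℤ)) with hα
    have hα0 : 0 ≤ α := mul_nonneg hβ (le_of_lt (zpow_pos hγ _))
    have hαβ : α * γ ^ (((T-σ:ℕ):ℤ) - (m:ℤ)) = β := by
      rw [hα, mul_assoc, ← zpow_add₀ hγ0]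
      have e0 : (m:ℤ) - ((T-σ:ℕ):ℤ) + (((T-σ:ℕ):ℤ) - (m:ℤ)) = 0 := by ring
      rw [e0, zpow_zero, mul_one]
    have hel : (Cost y γ lam m α +
        Cost (fun t => y (T + 1 - t)) (1/γ) lam (T - m) (γ * α)) ∈ A3 := ⟨α, hα0, rfl⟩
    have hb1 : Cost y γ lam m α ≤ Fval y γ lam t + segCost y γ t m α + lam :=
      Cost_le hlam ht α
    have hb2 : Cost (fun t => y (T + 1 - t)) (1/γ) lam (T - m) (γ*α)
        ≤ Fval (fun t => y (T + 1 - t)) (1/γ) lam σ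
          + segCost (fun t => y (T + 1 - t)) (1/γ) σ (T-m) (γ*α) + lam :=
      Cost_le hlam hσ (γ*α)
    have hkey := key_split (y := y) hγ ht hm2 hσ α
    rw [hαβ] at hkey
    rw [Fval_eq_G hlam] at hb1
    rw [Fval_eq_G hlam] at hb2
    have h0 := csInf_le hA3_bdd hel
    rw [hβval]
    linarith
  have hA3_ge : ∀ c ∈ A3, ∃ t σ : ℕ, t < m ∧ σ < T - m ∧
      G y γ lam t + segMin y γ t (T - σ)
        + G (fun s => y (T + 1 - s)) (1/γ) lam σ + 2*lam ≤ c := by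
    rintro c ⟨α, hα, rfl⟩
    obtain ⟨t, ht, hCt⟩ := Cost_attain (y := y) (γ := γ) hlam hm1 α
    obtain ⟨σ, hσ, hCσ⟩ := Cost_attain (y := fun t => y (T + 1 - t)) (γ := 1/γ) hlam hTm (γ*α)
    refine ⟨t, σ, ht, hσ, ?_⟩
    have hkey := key_split (y := y) hγ ht hm2 hσ α
    have hmin : segMin y γ t (T-σ) ≤ segCost y γ t (T-σ) (α * γ^((((T-σ:ℕ)):ℤ) - (m:ℤ))) :=
      segMin_le y γ _ _ (mul_nonneg hα (le_of_lt (zpow_pos hγ _)))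
    rw [hCt, hCσ, Fval_eq_G hlam, Fval_eq_G hlam]
    linarith
  constructor
  · -- C ≤ C' implies m is a changepoint of an optimal segmentation
    intro h
    obtain ⟨k, τ, j0, hseg, hj1, hj0, hτ, hval⟩ := join_meet (y := y) hγ hlam hm1 hm2
    refine ⟨k, τ, hseg, ⟨j0, hj1, hj0, hτ⟩, ?_⟩
    have h1 : sInf (SegVals y γ lam T) ≤ objOpt y γ lam k τ :=
      csInf_le (SegVals_bdd hlam T) ⟨k, τ, hseg, rfl⟩
    have h2 : objOpt y γ lam k τ ≤ sInf (SegVals y γ lam T) := by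
      rw [hval]
      apply le_csInf (SegVals_nonempty T (by omega))
      rintro c ⟨k', τ', hseg', rfl⟩
      rcases S_split hm1 hm2 hseg' with ⟨j, hj1', hj', hτ'⟩ | ⟨j0', hj0', hlt1, hlt2⟩
      · exact Sm_lb hγ hlam hm1 hm2 hseg' hj1' hj' hτ'
      · have hb := Sn_lb (y := y) hγ hlam hm1 hm2 hseg' hj0' hlt1 hlt2
        have hwT : τ' (j0'+1) ≤ T := seg_le_b hseg' (by omega)
        have hw : T - τ' (j0'+1) < T - m := by omega
        have h3 := hA3_le_W (τ' j0') (T - τ' (j0'+1)) hlt1 hw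
        linarith
    exact le_antisymm h2 h1
  · -- m changepoint of optimal segmentation implies C ≤ C'
    rintro ⟨k, τ, hseg, ⟨j, hj1, hjk, hτ⟩, hopt⟩
    have hC_le : G y γ lam m + G (fun s => y (T + 1 - s)) (1/γ) lam (T - m) + lam
        ≤ objOpt y γ lam k τ := Sm_lb hγ hlam hm1 hm2 hseg hj1 hjk hτ
    have hS_le_A3 : sInf (SegVals y γ lam T) ≤ sInf A3 := by
      apply le_csInf hA3_ne
      intro c hc
      obtain ⟨t, σ, ht, hσ, hle⟩ := hA3_ge c hc
      obtain ⟨k', τ', j0', hseg', _, _, _, hval'⟩ := hW_mem t σ ht hσ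
      have := csInf_le (SegVals_bdd hlam T) (show objOpt y γ lam k' τ' ∈ SegVals y γ lam T
        from ⟨k', τ', hseg', rfl⟩)
      rw [hval'] at this
      linarith
    calc G y γ lam m + G (fun s => y (T + 1 - s)) (1/γ) lam (T - m) + lam
        ≤ objOpt y γ lam k τ := hC_le
      _ = sInf (SegVals y γ lam T) := hopt
      _ ≤ sInf A3 := hS_le_A3
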